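/- Let K be a field of characteristic zero, let s ≥ 1 and r_1,…,r_s ≥ 1 be integers, and fix i ∈ {1,…,s}. Let R = K[x, y_{1,1},…,y_{s,r_s}] and let D = ∂_x + Σ_{j=1}^{r_i} (a_i(x)·y_{i,j} + b_{i,j}(x))·∂_{i,j} + Σ_{l≠i, 1≤l≤s} Σ_{j=1}^{r_l} a_l(x)·y_{l,j}·∂_{l,j} be the K-derivation of R, where a_1,…,a_s, b_{i,1},…,b_{i,r_i} ∈ K[x]. If Im D = D(R) is a Mathieu–Zhao space of R, then a_i(x) is constant, i.e., a_i(x) ∈ K. -/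

import Mathlib

open MvPolynomial

/-- A `K`-subspace `M` of `R` is a Mathieu–Zhao space if for all `a, b ∈ R` such that
`a ^ m ∈ M` for all `m ≥ 1`, there exists `N` such that `b * a ^ m ∈ M` for all `m ≥ N`. -/
def IsMathieuZhao (K : Type*) {R : Type*} [Field K] [CommRing R] [Algebra K R]
    (M : Submodule K R) : Prop :=
  ∀ a b : R, (∀ m : ℕ, 1 ≤ m → a ^ m ∈ M) →
    ∃ N : ℕ, ∀ m : ℕ, N ≤ m → b * a ^ m ∈ M

/-- A `K`-derivation `D` of `R` is simple if the only ideals `I` of `R` with `D(I) ⊆ I`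
are `0` and `R`. -/
def Derivation.IsSimple {K R : Type*} [CommRing K] [CommRing R] [Algebra K R]
    (D : Derivation K R R) : Prop :=
  ∀ I : Ideal R, (∀ a ∈ I, D a ∈ I) → I = ⊥ ∨ I = ⊤


namespace S5Aux

variable {K : Type*} [CommRing K]

/-- Any derivation on a multivariate polynomial ring over a finite variable set
is given by the sum of partial derivatives times images of variables. -/
theorem deriv_eq_sum {σ : Type*} [Fintype σ] [DecidableEq σ]
    (E : Derivation K (MvPolynomial σ K) (MvPolynomial σ K)) (p : MvPolynomial σ K) :
    E p = ∑ u, pderiv u p * E (X u) := by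
  induction p using MvPolynomial.induction_on with
  | C c =>
      rw [← MvPolynomial.algebraMap_eq, Derivation.map_algebraMap]
      simp [pderiv_C]
  | add p q hp hq =>
      simp only [map_add, hp, hq, ← Finset.sum_add_distrib, ← add_mul]
  | mul_X p u hp =>
      rw [Derivation.leibniz]
      simp only [smul_eq_mul, pderiv_mul, add_mul, Finset.sum_add_distrib]
      have h1 : ∑ v, pderiv v p * X u * E (X v) = (∑ v, pderiv v p * E (X v)) * X u := by
        rw [Finset.sum_mul]; apply Finset.sum_congr rfl; intro v _; ring
      have h2 : ∑ v, p * pderiv v (X u) * E (X v) = p * E (X u) := by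
        rw [Finset.sum_eq_single u]
        · simp
        · intro v _ hv; rw [pderiv_X_of_ne (Ne.symm hv)]; simp
        · simp
      rw [h1, h2, hp]; ring

theorem pderiv_isWeightedHomogeneous {σ : Type*} [DecidableEq σ] {w : σ → ℕ}
    {p : MvPolynomial σ K} {n : ℕ}
    (hp : IsWeightedHomogeneous w p n) (u : σ) :
    IsWeightedHomogeneous w (pderiv u p) (n - w u) := by
  classical
  nth_rewrite 1 [p.as_sum]
  rw [map_sum]
  apply IsWeightedHomogeneous.sum
  intro d hd
  rw [pderiv_monomial]
  by_cases h0 : d u = 0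
  · rw [h0]; simp only [Nat.cast_zero, mul_zero, monomial_zero]
    exact isWeightedHomogeneous_zero _ _ _
  · apply isWeightedHomogeneous_monomial
    have hwd : Finsupp.weight w d = n := hp (mem_support_iff.mp hd)
    have hsplit : d - Finsupp.single u 1 + Finsupp.single u 1 = d := by
      ext v
      rcases eq_or_ne u v with hv | hv
      · subst hv
        simp only [Finsupp.add_apply, Finsupp.tsub_apply, Finsupp.single_eq_same]
        omega
      · simp [Finsupp.single_eq_of_ne' hv]
    have := congrArg (Finsupp.weight w) hsplit
    rw [map_add] at this
    have hsingle : Finsupp.weight w (Finsupp.single u 1) = w u := by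
      simp [Finsupp.weight_apply, Finsupp.sum_single_index]
    rw [hsingle, hwd] at this
    omega

theorem pderiv_eq_zero_of_isWeightedHomogeneous_lt {σ : Type*} [DecidableEq σ] {w : σ → ℕ}
    {p : MvPolynomial σ K} {n : ℕ}
    (hp : IsWeightedHomogeneous w p n) {u : σ} (h : n < w u) :
    pderiv u p = 0 := by
  apply pderiv_eq_zero_of_notMem_vars
  intro hu
  obtain ⟨d, hd, hud⟩ := (mem_vars u).mp hu
  have h1 : w u ≤ Finsupp.weight w d :=
    Finsupp.le_weight_of_ne_zero' w (Finsupp.mem_support_iff.mp hud)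
  rw [hp (mem_support_iff.mp hd)] at h1
  omega

theorem euler {σ : Type*} [Fintype σ] [DecidableEq σ] {w : σ → ℕ}
    {p : MvPolynomial σ K} {n : ℕ} (hp : IsWeightedHomogeneous w p n) :
    ∑ u, w u • (X u * pderiv u p) = n • p := by
  conv_rhs => rw [p.as_sum]
  rw [Finset.smul_sum]
  have : ∀ u, w u • (X u * pderiv u p) =
      ∑ d ∈ p.support, w u • (X u * pderiv u (monomial d (coeff d p))) := by
    intro u
    nth_rewrite 1 [p.as_sum]
    rw [map_sum, Finset.mul_sum, Finset.smul_sum]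
  simp only [this]
  rw [Finset.sum_comm]
  apply Finset.sum_congr rfl
  intro d hd
  have hwd : Finsupp.weight w d = n := hp (mem_support_iff.mp hd)
  have hterm : ∀ u, w u • (X u * pderiv u (monomial d (coeff d p))) =
      monomial d ((w u * d u) • coeff d p) := by
    intro u
    rw [pderiv_monomial]
    by_cases h0 : d u = 0
    · rw [h0]; simp
    · have hsplit : Finsupp.single u 1 + (d - Finsupp.single u 1) = d := by
        ext v
        rcases eq_or_ne u v with hv | hv
        · subst hv
          simp only [Finsupp.add_apply, Finsupp.tsub_apply, Finsupp.single_eq_same]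
          omega
        · simp [Finsupp.single_eq_of_ne' hv]
      rw [X, monomial_mul, hsplit, one_mul, smul_monomial]
      congr 1
      push_cast [smul_eq_mul, nsmul_eq_mul]
      ring
  simp only [hterm]
  rw [← map_sum (monomial d), smul_monomial]
  congr 1
  rw [← Finset.sum_smul]
  congr 1
  have hsum : ∑ u : σ, w u * d u = Finsupp.weight w d := by
    rw [Finsupp.weight_apply, Finsupp.sum]
    rw [← Finset.sum_subset (Finset.subset_univ d.support) (fun u _ hu => by
      rw [Finsupp.notMem_support_iff] at hu; simp [hu])]
    exact Finset.sum_congr rfl fun u _ => by rw [smul_eq_mul, mul_comm]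
  rw [hsum, hwd]

theorem aeval_X_isWeightedHomogeneous {σ : Type*} {w : σ → ℕ} {u₀ : σ} (h : w u₀ = 0)
    (q : Polynomial K) :
    IsWeightedHomogeneous w (Polynomial.aeval (X u₀ : MvPolynomial σ K) q) 0 := by
  induction q using Polynomial.induction_on' with
  | add p q hp hq => rw [map_add]; exact hp.add hq
  | monomial k c =>
      rw [Polynomial.aeval_monomial]
      have h1 : IsWeightedHomogeneous w ((X u₀ : MvPolynomial σ K) ^ k) 0 := by
        induction k with
        | zero => simpa using isWeightedHomogeneous_one K w
        | succ k ih =>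
            rw [pow_succ]
            have := ih.mul (isWeightedHomogeneous_X K w u₀)
            rwa [h, add_zero] at this
      have h2 : IsWeightedHomogeneous w
          (algebraMap K (MvPolynomial σ K) c) 0 := by
        rw [MvPolynomial.algebraMap_eq]
        exact isWeightedHomogeneous_C w c
      simpa using h2.mul h1

theorem mkDerivation_isWeightedHomogeneous {σ : Type*} [Fintype σ] [DecidableEq σ] {w : σ → ℕ}
    {f : σ → MvPolynomial σ K} (hf : ∀ u, IsWeightedHomogeneous w (f u) (w u))
    {p : MvPolynomial σ K} {n : ℕ} (hp : IsWeightedHomogeneous w p n) :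
    IsWeightedHomogeneous w (mkDerivation K f p) n := by
  rw [deriv_eq_sum]
  apply IsWeightedHomogeneous.sum
  intro u _
  rw [mkDerivation_X]
  by_cases hc : w u ≤ n
  · have h1 := (pderiv_isWeightedHomogeneous hp u).mul (hf u)
    rwa [Nat.sub_add_cancel hc] at h1
  · rw [pderiv_eq_zero_of_isWeightedHomogeneous_lt hp (by omega), zero_mul]
    exact isWeightedHomogeneous_zero _ _ _

theorem mkDerivation_isWeightedHomogeneous_sub {σ : Type*} [Fintype σ] [DecidableEq σ] {w : σ → ℕ}
    {f : σ → MvPolynomial σ K} (hf : ∀ u, IsWeightedHomogeneous w (f u) (w u - 1))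
    (hf0 : ∀ u, w u = 0 → f u = 0)
    {p : MvPolynomial σ K} {n : ℕ} (hp : IsWeightedHomogeneous w p n) :
    IsWeightedHomogeneous w (mkDerivation K f p) (n - 1) := by
  rw [deriv_eq_sum]
  apply IsWeightedHomogeneous.sum
  intro u _
  rw [mkDerivation_X]
  by_cases h0 : w u = 0
  · rw [hf0 u h0, mul_zero]
    exact isWeightedHomogeneous_zero _ _ _
  by_cases hc : w u ≤ n
  · have h1 := (pderiv_isWeightedHomogeneous hp u).mul (hf u)
    have : n - w u + (w u - 1) = n - 1 := by omega
    rwa [this] at h1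
  · rw [pderiv_eq_zero_of_isWeightedHomogeneous_lt hp (by omega), zero_mul]
    exact isWeightedHomogeneous_zero _ _ _

theorem mkDerivation_eq_zero_of_homog_zero {σ : Type*} [Fintype σ] [DecidableEq σ] {w : σ → ℕ}
    {f : σ → MvPolynomial σ K} (hf0 : ∀ u, w u = 0 → f u = 0)
    {p : MvPolynomial σ K} (hp : IsWeightedHomogeneous w p 0) :
    mkDerivation K f p = 0 := by
  rw [deriv_eq_sum]
  apply Finset.sum_eq_zero
  intro u _
  rw [mkDerivation_X]
  by_cases h0 : w u = 0
  · rw [hf0 u h0, mul_zero]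
  · rw [pderiv_eq_zero_of_isWeightedHomogeneous_lt hp (by omega), zero_mul]

/-- Component identity: for `D₀` preserving degree and `D₁` lowering it by one. -/
theorem comp_identity {σ : Type*} [DecidableEq σ] (w : σ → ℕ)
    (D₀ D₁ : Derivation K (MvPolynomial σ K) (MvPolynomial σ K))
    (hH0 : ∀ (p : MvPolynomial σ K) (n : ℕ), IsWeightedHomogeneous w p n →
      IsWeightedHomogeneous w (D₀ p) n)
    (hH1 : ∀ (p : MvPolynomial σ K) (n : ℕ), IsWeightedHomogeneous w p n →
      IsWeightedHomogeneous w (D₁ p) (n - 1))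
    (hH1z : ∀ p : MvPolynomial σ K, IsWeightedHomogeneous w p 0 → D₁ p = 0)
    (p : MvPolynomial σ K) (m : ℕ) :
    weightedHomogeneousComponent w m (D₀ p + D₁ p) =
      D₀ (weightedHomogeneousComponent w m p) +
        D₁ (weightedHomogeneousComponent w (m + 1) p) := by
  classical
  induction p using MvPolynomial.induction_on' with
  | add p q hp hq =>
      simp only [map_add] at hp hq ⊢
      linear_combination hp + hq
  | monomial d c =>
      set k := Finsupp.weight w d with hk
      have hq : IsWeightedHomogeneous w (monomial d c) k :=
        isWeightedHomogeneous_monomial w d c rfl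
      have h₀ : IsWeightedHomogeneous w (D₀ (monomial d c)) k := hH0 _ _ hq
      have h₁ : IsWeightedHomogeneous w (D₁ (monomial d c)) (k - 1) := hH1 _ _ hq
      rw [map_add,
        weightedHomogeneousComponent_of_mem (mem_weightedHomogeneousSubmodule _ _ _ _ |>.mpr h₀),
        weightedHomogeneousComponent_of_mem (mem_weightedHomogeneousSubmodule _ _ _ _ |>.mpr h₁),
        weightedHomogeneousComponent_of_mem (mem_weightedHomogeneousSubmodule _ _ _ _ |>.mpr hq),
        weightedHomogeneousComponent_of_mem (mem_weightedHomogeneousSubmodule _ _ _ _ |>.mpr hq)]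
      congr 1
      · split_ifs <;> simp
      · rcases Nat.eq_zero_or_pos k with hk0 | hk0
        · rw [hk0]
          have hz : D₁ (monomial d c) = 0 := hH1z _ (by rw [← hk0]; exact hq)
          simp [hz]
        · have : (m = k - 1) ↔ (m + 1 = k) := by omega
          split_ifs with h1 h2 h2
          · rfl
          · exact absurd (this.mp h1) h2
          · exact absurd (this.mpr h2) h1
          · simp

theorem comm_hom_derivation {σ : Type*} (φ : MvPolynomial σ K →ₐ[K] MvPolynomial σ K)
    (E : Derivation K (MvPolynomial σ K) (MvPolynomial σ K))
    (h : ∀ u, φ (E (X u)) = E (φ (X u))) (p : MvPolynomial σ K) :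
    φ (E p) = E (φ p) := by
  induction p using MvPolynomial.induction_on with
  | C c =>
      rw [← MvPolynomial.algebraMap_eq, Derivation.map_algebraMap,
        AlgHom.commutes, Derivation.map_algebraMap, map_zero]
  | add p q hp hq => rw [map_add, map_add, map_add, hp, hq, map_add]
  | mul_X p u hp =>
      simp only [Derivation.leibniz, smul_eq_mul, map_add, map_mul, hp, h u]

theorem comm_hom_pderiv {σ S : Type*} [CommRing S] [Algebra K S]
    (φ : MvPolynomial σ K →ₐ[K] Polynomial S) (u₀ : σ)
    (h0 : φ (X u₀) = Polynomial.X)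
    (h1 : ∀ u, u ≠ u₀ → Polynomial.derivative (φ (X u)) = 0)
    (p : MvPolynomial σ K) :
    φ (pderiv u₀ p) = Polynomial.derivative (φ p) := by
  classical
  induction p using MvPolynomial.induction_on with
  | C c =>
      rw [pderiv_C, map_zero, ← MvPolynomial.algebraMap_eq, AlgHom.commutes,
        Polynomial.algebraMap_apply, Polynomial.derivative_C]
  | add p q hp hq => simp only [map_add, hp, hq]
  | mul_X p u hp =>
      rw [pderiv_mul, map_add, map_mul, map_mul, map_mul, Polynomial.derivative_mul, hp]
      rcases eq_or_ne u u₀ with hu | hu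
      · subst hu
        rw [pderiv_X_self, h0]
        simp
      · rw [pderiv_X_of_ne hu, h1 u hu]
        simp

theorem pderiv_comm {σ : Type*} [DecidableEq σ] (u v : σ) (p : MvPolynomial σ K) :
    pderiv u (pderiv v p) = pderiv v (pderiv u p) := by
  induction p using MvPolynomial.induction_on' with
  | add p q hp hq => simp [map_add, hp, hq]
  | monomial d c =>
      rcases eq_or_ne u v with huv | huv
      · rw [huv]
      · have hsub : d - Finsupp.single v 1 - Finsupp.single u 1
            = d - Finsupp.single u 1 - Finsupp.single v 1 := by
          ext x
          simp only [Finsupp.coe_tsub, Pi.sub_apply]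
          omega
        simp only [pderiv_monomial, Finsupp.tsub_apply, hsub,
          Finsupp.single_eq_of_ne' (Ne.symm huv), Finsupp.single_eq_of_ne' huv, Nat.sub_zero]
        rw [mul_right_comm]

theorem aeval_X_map {S : Type*} [CommRing S] [Algebra K S] (q : Polynomial K) :
    Polynomial.aeval (Polynomial.X : Polynomial S) q = q.map (algebraMap K S) := by
  induction q using Polynomial.induction_on' with
  | add p q hp hq => rw [map_add, Polynomial.map_add, hp, hq]
  | monomial k c =>
      rw [Polynomial.aeval_monomial, Polynomial.map_monomial, Polynomial.algebraMap_apply,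
        ← Polynomial.C_mul_X_pow_eq_monomial]

end S5Aux

open S5Aux

/-- For `D = ∂ₓ + Σⱼ (aᵢ(x) yᵢⱼ + bᵢⱼ(x)) ∂ᵢⱼ + Σ_{l ≠ i} Σⱼ aₗ(x) yₗⱼ ∂ₗⱼ`
(the `b`'s vanish away from the fixed index `i`):
if `Im D` is a Mathieu–Zhao space, then `aᵢ(x)` is a constant. -/
theorem statement5 (K : Type*) [Field K] [CharZero K]
    (s : ℕ) (hs : 1 ≤ s) (r : Fin s → ℕ) (hr : ∀ l, 1 ≤ r l) (i : Fin s)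
    (a : Fin s → Polynomial K) (b : (l : Fin s) → Fin (r l) → Polynomial K)
    (hb : ∀ l : Fin s, l ≠ i → ∀ j : Fin (r l), b l j = 0)
    (D : Derivation K (MvPolynomial (Option (Σ l : Fin s, Fin (r l))) K)
      (MvPolynomial (Option (Σ l : Fin s, Fin (r l))) K))
    (hDx : D (X none) = 1)
    (hDy : ∀ (l : Fin s) (j : Fin (r l)),
      D (X (some ⟨l, j⟩)) =
        Polynomial.aeval (X none) (a l) * X (some ⟨l, j⟩)
          + Polynomial.aeval (X none) (b l j))
    (hMZ : IsMathieuZhao K (LinearMap.range D.toLinearMap)) :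
    ∃ c : K, a i = Polynomial.C c := by
  classical
  by_contra hcon
  push_neg at hcon
  have hne : (a i).natDegree ≠ 0 := fun h => by
    obtain ⟨c, hc⟩ := Polynomial.natDegree_eq_zero.mp h
    exact hcon c hc.symm
  have hane : a i ≠ 0 := fun h => hne (by simp [h])
  -- Step 1 : D is surjective
  have hone : (1 : MvPolynomial (Option (Σ l : Fin s, Fin (r l))) K)
      ∈ LinearMap.range D.toLinearMap := ⟨X none, hDx⟩
  have hsurj : ∀ p : MvPolynomial (Option (Σ l : Fin s, Fin (r l))) K, ∃ q, D q = p := by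
    intro p
    obtain ⟨N, hN⟩ := hMZ 1 p (fun m _ => by simpa [one_pow] using hone)
    obtain ⟨q, hq⟩ := hN N le_rfl
    exact ⟨q, by simpa [one_pow, mul_one] using hq⟩
  set u₁ : Option (Σ l : Fin s, Fin (r l)) := some ⟨i, ⟨0, hr i⟩⟩ with hu₁
  set Y : MvPolynomial (Option (Σ l : Fin s, Fin (r l))) K := X u₁ with hY
  obtain ⟨F, hF⟩ := hsurj Y
  -- Step 2 : project away the variables y_{l,j} with l ≠ i
  set g : Option (Σ l : Fin s, Fin (r l)) → MvPolynomial (Option (Σ l : Fin s, Fin (r l))) K :=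
    fun u => u.elim (X none) (fun v => if v.1 = i then X (some v) else 0) with hg
  set ρ : MvPolynomial (Option (Σ l : Fin s, Fin (r l))) K →ₐ[K]
      MvPolynomial (Option (Σ l : Fin s, Fin (r l))) K := aeval g with hρ
  have hρapp : ∀ u, ρ (X u) = g u := fun u => aeval_X g u
  have hgnone : g none = X none := rfl
  have hAmap : ∀ (q' : Polynomial K),
      ρ (Polynomial.aeval (X none) q') = Polynomial.aeval (X none) q' := by
    intro q'
    rw [← Polynomial.aeval_algHom_apply ρ (X none) q', hρapp, hgnone]
  have hρX : ∀ u, ρ (D (X u)) = D (ρ (X u)) := by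
    intro u
    match u with
    | none => rw [hDx, map_one, hρapp, hgnone, hDx]
    | some v =>
      obtain ⟨l, j⟩ := v
      rw [hDy l j, map_add, map_mul, hAmap, hAmap, hρapp]
      by_cases hl : l = i
      · have hgv : g (some ⟨l, j⟩) = X (some ⟨l, j⟩) := by
          show (if l = i then _ else _) = _
          rw [if_pos hl]
        rw [hgv, hDy l j]
      · have hgz : g (some ⟨l, j⟩) = 0 := by
          show (if l = i then _ else _) = _
          rw [if_neg hl]
        rw [hgz, hb l hl j, map_zero, map_zero, mul_zero, add_zero]
  have hcommρ : ∀ p, ρ (D p) = D (ρ p) := fun p => comm_hom_derivation ρ D hρX p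
  set G := ρ F with hG
  have hDG : D G = Y := by
    have h1 : ρ Y = Y := by
      rw [hY, hρapp, hu₁]
      show (if i = i then _ else _) = _
      rw [if_pos rfl]
    rw [hG, ← hcommρ F, hF, h1]
  -- good variables
  have hGv : ∀ v : (Σ l : Fin s, Fin (r l)), v.1 ≠ i → some v ∉ G.vars := by
    intro v hv hmem
    have hmem2 := vars_bind₁ g F hmem
    rw [Finset.mem_biUnion] at hmem2
    obtain ⟨u, _, hmem3⟩ := hmem2
    match u with
    | none =>
        rw [show g none = X none from rfl, vars_X] at hmem3
        simp at hmem3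
    | some v' =>
        by_cases hv' : v'.1 = i
        · rw [show g (some v') = if v'.1 = i then X (some v') else 0 from rfl,
            if_pos hv', vars_X, Finset.mem_singleton, Option.some_inj] at hmem3
          subst hmem3
          exact hv hv'
        · rw [show g (some v') = if v'.1 = i then X (some v') else 0 from rfl,
            if_neg hv', vars_0] at hmem3
          simp at hmem3
  -- the weight
  set w : Option (Σ l : Fin s, Fin (r l)) → ℕ := fun u => u.elim 0 fun _ => 1 with hw
  have hwnone : w none = 0 := rfl
  have hwsome : ∀ v, w (some v) = 1 := fun v => rfl
  have hGoodC : ∀ (m : ℕ) (v : (Σ l : Fin s, Fin (r l))), v.1 ≠ i →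
      pderiv (some v) (weightedHomogeneousComponent w m G) = 0 := by
    intro m v hv
    apply pderiv_eq_zero_of_notMem_vars
    intro hmem
    obtain ⟨d, hd, hud⟩ := (mem_vars _).mp hmem
    have hc : coeff d (weightedHomogeneousComponent w m G) ≠ 0 := mem_support_iff.mp hd
    rw [coeff_weightedHomogeneousComponent] at hc
    have hcG : coeff d G ≠ 0 := by
      by_cases h : Finsupp.weight w d = m
      · rwa [if_pos h] at hc
      · rw [if_neg h] at hc; exact absurd rfl hc
    exact hGv v hv ((mem_vars _).mpr ⟨d, mem_support_iff.mpr hcG, hud⟩)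
  -- the two pieces of D
  set f₀ : Option (Σ l : Fin s, Fin (r l)) → MvPolynomial (Option (Σ l : Fin s, Fin (r l))) K :=
    fun u => u.elim 1 (fun v => Polynomial.aeval (X none) (a v.1) * X (some v)) with hf₀
  set f₁ : Option (Σ l : Fin s, Fin (r l)) → MvPolynomial (Option (Σ l : Fin s, Fin (r l))) K :=
    fun u => u.elim 0 (fun v => Polynomial.aeval (X none) (b v.1 v.2)) with hf₁
  set D₀ := mkDerivation K f₀ with hD₀
  set D₁ := mkDerivation K f₁ with hD₁
  have hf₀none : f₀ none = 1 := rfl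
  have hf₀some : ∀ v, f₀ (some v) = Polynomial.aeval (X none) (a v.1) * X (some v) :=
    fun v => rfl
  have hf₁none : f₁ none = 0 := rfl
  have hf₁some : ∀ v, f₁ (some v) = Polynomial.aeval (X none) (b v.1 v.2) := fun v => rfl
  have hDeq : ∀ p, D p = D₀ p + D₁ p := by
    have h : D = D₀ + D₁ := by
      apply derivation_ext
      intro u
      match u with
      | none =>
          rw [hDx]
          show (1 : MvPolynomial _ K) = D₀ (X none) + D₁ (X none)
          rw [hD₀, hD₁, mkDerivation_X, mkDerivation_X, hf₀none, hf₁none, add_zero]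
      | some v =>
          obtain ⟨l, j⟩ := v
          rw [hDy l j]
          show _ = D₀ (X (some ⟨l, j⟩)) + D₁ (X (some ⟨l, j⟩))
          rw [hD₀, hD₁, mkDerivation_X, mkDerivation_X, hf₀some, hf₁some]
    intro p; rw [h]; rfl
  -- homogeneity of the pieces
  have H0 : ∀ (p : MvPolynomial (Option (Σ l : Fin s, Fin (r l))) K) (n : ℕ),
      IsWeightedHomogeneous w p n → IsWeightedHomogeneous w (D₀ p) n := by
    intro p n hp
    apply mkDerivation_isWeightedHomogeneous _ hp
    intro u
    match u with
    | none => exact isWeightedHomogeneous_one K w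
    | some v =>
        rw [hf₀some]
        have h1 := (aeval_X_isWeightedHomogeneous (w := w) hwnone (a v.1)).mul
          (isWeightedHomogeneous_X K w (some v))
        rwa [zero_add] at h1
  have H1 : ∀ (p : MvPolynomial (Option (Σ l : Fin s, Fin (r l))) K) (n : ℕ),
      IsWeightedHomogeneous w p n → IsWeightedHomogeneous w (D₁ p) (n - 1) := by
    intro p n hp
    apply mkDerivation_isWeightedHomogeneous_sub _ _ hp
    · intro u
      match u with
      | none => exact isWeightedHomogeneous_zero K w _
      | some v => exact aeval_X_isWeightedHomogeneous (w := w) hwnone (b v.1 v.2)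
    · intro u hu
      match u with
      | none => rfl
      | some v => rw [hwsome] at hu; exact absurd hu one_ne_zero
  have H1z : ∀ p : MvPolynomial (Option (Σ l : Fin s, Fin (r l))) K,
      IsWeightedHomogeneous w p 0 → D₁ p = 0 := by
    intro p hp
    apply mkDerivation_eq_zero_of_homog_zero _ hp
    intro u hu
    match u with
    | none => rfl
    | some v => rw [hwsome] at hu; exact absurd hu one_ne_zero
  -- the action of D₀ on good homogeneous polynomials
  have hD0apply : ∀ (q : MvPolynomial (Option (Σ l : Fin s, Fin (r l))) K) (m : ℕ),
      IsWeightedHomogeneous w q m →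
      (∀ v : (Σ l : Fin s, Fin (r l)), v.1 ≠ i → pderiv (some v) q = 0) →
      D₀ q = pderiv none q + Polynomial.aeval (X none) (a i) * (m • q) := by
    intro q m hq hgood
    rw [hD₀, deriv_eq_sum, univ_option, Finset.sum_insertNone]
    simp only [mkDerivation_X]
    have hterm : ∀ v : (Σ l : Fin s, Fin (r l)), pderiv (some v) q * f₀ (some v)
        = Polynomial.aeval (X none) (a i) * (w (some v) • (X (some v) * pderiv (some v) q)) := by
      intro v
      by_cases hv : v.1 = i
      · rw [hf₀some, hv, hwsome, one_smul]
        ring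
      · rw [hgood v hv]
        simp
    rw [Finset.sum_congr rfl (fun v _ => hterm v), ← Finset.mul_sum]
    have heuler := euler (w := w) hq
    rw [univ_option, Finset.sum_insertNone, hwnone, zero_smul, zero_add] at heuler
    rw [heuler, hf₀none, mul_one]
  -- the kernel lemma
  have hker : ∀ (q : MvPolynomial (Option (Σ l : Fin s, Fin (r l))) K) (m : ℕ), 1 ≤ m →
      IsWeightedHomogeneous w q m →
      (∀ v : (Σ l : Fin s, Fin (r l)), v.1 ≠ i → pderiv (some v) q = 0) →
      D₀ q = 0 → q = 0 := by
    intro q m hm hq hgood h0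
    by_contra hq0
    rw [hD0apply q m hq hgood] at h0
    have heq : pderiv none q = -(Polynomial.aeval (X none) (a i) * (m • q)) :=
      eq_neg_of_add_eq_zero_left h0
    set Φ := optionEquivLeft K (Σ l : Fin s, Fin (r l)) with hΦ
    have hΦcomm := comm_hom_pderiv (K := K) Φ.toAlgHom none
      (by show Φ (X none) = Polynomial.X; rw [hΦ]; exact optionEquivLeft_X_none K _)
      (by
        intro u hu
        match u with
        | none => exact absurd rfl hu
        | some x =>
            show Polynomial.derivative (Φ (X (some x))) = 0
            rw [hΦ, optionEquivLeft_X_some, Polynomial.derivative_C]) q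
    have hQ0 : Φ q ≠ 0 := fun h => hq0 (by
      have := congrArg Φ.symm h
      rwa [AlgEquiv.symm_apply_apply, map_zero] at this)
    have hA : Φ (Polynomial.aeval (X none) (a i))
        = (a i).map (algebraMap K (MvPolynomial (Σ l : Fin s, Fin (r l)) K)) := by
      rw [← Polynomial.aeval_algHom_apply Φ (X none) (a i),
        show Φ (X none) = Polynomial.X from by rw [hΦ]; exact optionEquivLeft_X_none K _,
        aeval_X_map]
    have hAne : Φ (Polynomial.aeval (X none) (a i)) ≠ 0 := by
      rw [hA]
      exact Polynomial.map_ne_zero hane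
    have hAdeg : (Φ (Polynomial.aeval (X none) (a i))).natDegree = (a i).natDegree := by
      rw [hA]
      exact Polynomial.natDegree_map_eq_of_injective
        (by rw [MvPolynomial.algebraMap_eq]; exact C_injective _ K) (a i)
    have hQeq : Polynomial.derivative (Φ q)
        = -(Φ (Polynomial.aeval (X none) (a i)) * (m • Φ q)) := by
      rw [show Polynomial.derivative (Φ q) = Φ.toAlgHom (pderiv none q) from (hΦcomm).symm,
        show (Φ.toAlgHom : MvPolynomial _ K → Polynomial (MvPolynomial _ K)) = Φ from rfl]
      rw [heq, map_neg, map_mul, map_nsmul]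
    have hmK : ((m : ℕ) : K) ≠ 0 := Nat.cast_ne_zero.mpr (by omega)
    have hcast : ((m : ℕ) : Polynomial (MvPolynomial (Σ l : Fin s, Fin (r l)) K)) ≠ 0 := by
      rw [← map_natCast (Polynomial.C :
          MvPolynomial (Σ l : Fin s, Fin (r l)) K →+* _) m, Polynomial.C_ne_zero,
        ← map_natCast (C : K →+* MvPolynomial (Σ l : Fin s, Fin (r l)) K) m]
      simp only [Ne, MvPolynomial.C_eq_zero]
      exact hmK
    have hsmul : m • Φ q = ((m : ℕ) : Polynomial (MvPolynomial (Σ l : Fin s, Fin (r l)) K))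
        * Φ q := by rw [nsmul_eq_mul]
    have hd0 : Polynomial.derivative (Φ q) ≠ 0 := by
      intro h
      rw [h] at hQeq
      have h2 := hQeq.symm
      rw [neg_eq_zero, hsmul] at h2
      exact (mul_ne_zero hAne (mul_ne_zero hcast hQ0)) h2
    have hndQ : (Φ q).natDegree ≠ 0 := by
      intro h
      obtain ⟨x, hx⟩ := Polynomial.natDegree_eq_zero.mp h
      rw [← hx, Polynomial.derivative_C] at hd0
      exact hd0 rfl
    have hlt := Polynomial.natDegree_derivative_lt hndQ
    have hrhs : (Polynomial.derivative (Φ q)).natDegree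
        = (a i).natDegree + (Φ q).natDegree := by
      rw [hQeq, Polynomial.natDegree_neg, hsmul,
        Polynomial.natDegree_mul hAne (mul_ne_zero hcast hQ0),
        Polynomial.natDegree_mul hcast hQ0, Polynomial.natDegree_natCast, hAdeg]
      omega
    omega
  -- the downward induction
  have hDGsum : D₀ G + D₁ G = Y := by rw [← hDeq, hDG]
  have hYhom : IsWeightedHomogeneous w Y 1 := by
    have := isWeightedHomogeneous_X K w u₁
    rw [hu₁] at this
    rwa [hwsome] at this
  have hCbig : ∀ k m, 2 ≤ m → weightedTotalDegree w G + 1 ≤ m + k →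
      weightedHomogeneousComponent w m G = 0 := by
    intro k
    induction k with
    | zero =>
        intro m hm hbound
        exact weightedHomogeneousComponent_eq_zero m G (by omega)
    | succ k ih =>
        intro m hm hbound
        by_cases hc : weightedTotalDegree w G + 1 ≤ m + k
        · exact ih m hm hc
        · have h2 : weightedHomogeneousComponent w (m + 1) G = 0 :=
            ih (m + 1) (by omega) (by omega)
          have hcomp := comp_identity w D₀ D₁ H0 H1 H1z G m
          rw [hDGsum, h2, map_zero, add_zero,
            hYhom.weightedHomogeneousComponent_ne m (by omega)] at hcomp
          exact hker _ m (by omega)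
            (weightedHomogeneousComponent_isWeightedHomogeneous m G) (hGoodC m) hcomp.symm
  -- degree one part
  have hC2 : weightedHomogeneousComponent w 2 G = 0 :=
    hCbig (weightedTotalDegree w G + 1) 2 le_rfl (by omega)
  have hcomp1 := comp_identity w D₀ D₁ H0 H1 H1z G 1
  rw [hDGsum, hC2, map_zero, add_zero,
    hYhom.weightedHomogeneousComponent_same] at hcomp1
  -- hcomp1 : Y = D₀ (whc w 1 G)
  have hq₁ : IsWeightedHomogeneous w (weightedHomogeneousComponent w 1 G) 1 :=
    weightedHomogeneousComponent_isWeightedHomogeneous 1 G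
  have hEq : pderiv none (weightedHomogeneousComponent w 1 G)
      + Polynomial.aeval (X none) (a i) * weightedHomogeneousComponent w 1 G = Y := by
    rw [hcomp1, hD0apply _ 1 hq₁ (hGoodC 1), one_smul]
  -- apply pderiv (some ⟨i, j₀⟩) and project
  have hAhom : IsWeightedHomogeneous w (Polynomial.aeval (X none) (a i)) 0 :=
    aeval_X_isWeightedHomogeneous hwnone (a i)
  have hA0 : pderiv u₁ (Polynomial.aeval (X none) (a i)) = 0 :=
    pderiv_eq_zero_of_isWeightedHomogeneous_lt hAhom (by rw [hu₁, hwsome]; omega)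
  have hstep := congrArg (pderiv u₁) hEq
  rw [map_add, pderiv_mul, hA0, zero_mul, zero_add, hY, pderiv_X_self,
    pderiv_comm] at hstep
  set ct := pderiv u₁ (weightedHomogeneousComponent w 1 G) with hct
  -- hstep : pderiv none ct + A * ct = 1
  have hcthom : IsWeightedHomogeneous w ct 0 := by
    have := pderiv_isWeightedHomogeneous hq₁ u₁
    rwa [hu₁, hwsome] at this
  set π : MvPolynomial (Option (Σ l : Fin s, Fin (r l))) K →ₐ[K] Polynomial K :=
    aeval (fun u => u.elim Polynomial.X fun _ => 0) with hπ
  have hπx : π (X none) = Polynomial.X := by rw [hπ, aeval_X]; rfl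
  have hπcomm := comm_hom_pderiv (K := K) π none hπx
    (by
      intro u hu
      match u with
      | none => exact absurd rfl hu
      | some x =>
          rw [hπ, aeval_X]
          show Polynomial.derivative (0 : Polynomial K) = 0
          rw [Polynomial.derivative_zero]) ct
  have hπA : π (Polynomial.aeval (X none) (a i)) = a i := by
    rw [← Polynomial.aeval_algHom_apply π (X none) (a i), hπx, Polynomial.aeval_X_left_apply]
  have hfinal : Polynomial.derivative (π ct) + a i * π ct = 1 := by
    have := congrArg π hstep
    rw [map_add, map_mul, map_one, hπA, hπcomm] at this
    exact this
  -- final contradiction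
  by_cases hc0 : π ct = 0
  · rw [hc0, mul_zero, add_zero, Polynomial.derivative_zero] at hfinal
    exact one_ne_zero hfinal.symm
  · have h1 : (a i * π ct).natDegree = (a i).natDegree + (π ct).natDegree :=
      Polynomial.natDegree_mul hane hc0
    by_cases hcd : (π ct).natDegree = 0
    · obtain ⟨x, hx⟩ := Polynomial.natDegree_eq_zero.mp hcd
      rw [← hx, Polynomial.derivative_C, zero_add] at hfinal
      have := congrArg Polynomial.natDegree hfinal
      rw [hx, h1, Polynomial.natDegree_one] at this
      omega
    · have hlt : (Polynomial.derivative (π ct)).natDegree < (a i * π ct).natDegree := by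
        have := Polynomial.natDegree_derivative_lt hcd
        omega
      have h2 := Polynomial.natDegree_add_eq_right_of_natDegree_lt hlt
      rw [hfinal, Polynomial.natDegree_one, h1] at h2
      omega
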